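/- With X = t₀ + σε, E(ε) = 0, E‖ε‖² = 1, t₀ not a fixed point, and ν = E(sup_{g∈G} ⟨g·ε, t₀/‖t₀‖⟩), one has ν ∈ (0, 1] whenever P(sup_g⟨g·X,t₀⟩ > ⟨X,t₀⟩) > 0; moreover σν − 2‖t₀‖ ≤ ‖t₀‖(a⋆ − 1) ≤ σν, where a⋆ = E(sup_g ⟨g·X, t₀⟩)/‖t₀‖². -/

import Mathlib

open MeasureTheory

/-- With `X = t₀ + σε`, `ν = E(sup_g ⟨g•ε, t₀/‖t₀‖⟩)` satisfies `ν ∈ (0,1]`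
whenever `P(sup_g ⟨g•X,t₀⟩ > ⟨X,t₀⟩) > 0`, and
`σν − 2‖t₀‖ ≤ ‖t₀‖(a⋆ − 1) ≤ σν`. -/
theorem stmt11 {M G Ω : Type*} [NormedAddCommGroup M] [InnerProductSpace ℝ M]
    [CompleteSpace M] [Group G] [MulAction G M] [MeasurableSpace Ω]
    (μ : Measure Ω) [IsProbabilityMeasure μ]
    (hlin : ∀ g : G, IsLinearMap ℝ fun x : M => g • x)
    (hiso : ∀ (g : G) (x : M), ‖g • x‖ = ‖x‖)
    (ε : Ω → M) (t₀ : M) (ht₀ : t₀ ≠ 0) (σ : ℝ) (hσ : 0 < σ)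
    (hεint : Integrable ε μ) (hεmean : ∫ ω, ε ω ∂μ = 0)
    (hε2 : (∫ ω, ‖ε ω‖ ^ 2 ∂μ) = 1)
    (hε2int : Integrable (fun ω => ‖ε ω‖ ^ 2) μ)
    (X : Ω → M) (hX : ∀ ω, X ω = t₀ + σ • ε ω)
    (hfix : ∃ g : G, g • t₀ ≠ t₀)
    (hbddX : ∀ ω, BddAbove (Set.range fun g : G => (inner ℝ (g • X ω) t₀ : ℝ)))
    (hsupX : Integrable (fun ω => ⨆ g : G, (inner ℝ (g • X ω) t₀ : ℝ)) μ)
    (hbddε : ∀ ω, BddAbove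
      (Set.range fun g : G => (inner ℝ (g • ε ω) (‖t₀‖⁻¹ • t₀) : ℝ)))
    (hsupε : Integrable
      (fun ω => ⨆ g : G, (inner ℝ (g • ε ω) (‖t₀‖⁻¹ • t₀) : ℝ)) μ)
    (hP : 0 < μ {ω | (inner ℝ (X ω) t₀ : ℝ) < ⨆ g : G, (inner ℝ (g • X ω) t₀ : ℝ)}) :
    (0 < ∫ ω, ⨆ g : G, (inner ℝ (g • ε ω) (‖t₀‖⁻¹ • t₀) : ℝ) ∂μ) ∧
    (∫ ω, ⨆ g : G, (inner ℝ (g • ε ω) (‖t₀‖⁻¹ • t₀) : ℝ) ∂μ) ≤ 1 ∧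
    σ * (∫ ω, ⨆ g : G, (inner ℝ (g • ε ω) (‖t₀‖⁻¹ • t₀) : ℝ) ∂μ) - 2 * ‖t₀‖
      ≤ ‖t₀‖ * ((∫ ω, ⨆ g : G, (inner ℝ (g • X ω) t₀ : ℝ) ∂μ) / ‖t₀‖ ^ 2 - 1) ∧
    ‖t₀‖ * ((∫ ω, ⨆ g : G, (inner ℝ (g • X ω) t₀ : ℝ) ∂μ) / ‖t₀‖ ^ 2 - 1)
      ≤ σ * ∫ ω, ⨆ g : G, (inner ℝ (g • ε ω) (‖t₀‖⁻¹ • t₀) : ℝ) ∂μ := by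

  classical
  have hc : (0:ℝ) < ‖t₀‖ := norm_pos_iff.mpr ht₀
  set u : M := ‖t₀‖⁻¹ • t₀ with hu
  have hnu : ‖u‖ = 1 := by
    rw [hu, norm_smul, norm_inv, norm_norm]
    field_simp
  have hXg : ∀ (g : G) (ω : Ω), (inner ℝ (g • X ω) t₀ : ℝ)
      = inner ℝ (g • t₀) t₀ + σ * inner ℝ (g • ε ω) t₀ := by
    intro g ω
    rw [hX ω, (hlin g).map_add, (hlin g).map_smul, inner_add_left, real_inner_smul_left]
  have hεu : ∀ (g : G) (ω : Ω), (inner ℝ (g • ε ω) u : ℝ)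
      = ‖t₀‖⁻¹ * inner ℝ (g • ε ω) t₀ := by
    intro g ω; rw [hu, real_inner_smul_right]
  have hgt : ∀ g : G, |(inner ℝ (g • t₀) t₀ : ℝ)| ≤ ‖t₀‖ ^ 2 := by
    intro g
    calc |(inner ℝ (g • t₀) t₀ : ℝ)| ≤ ‖g • t₀‖ * ‖t₀‖ := abs_real_inner_le_norm _ _
      _ = ‖t₀‖ ^ 2 := by rw [hiso]; ring
  set F : Ω → ℝ := fun ω => ⨆ g : G, (inner ℝ (g • ε ω) u : ℝ) with hF
  set A : Ω → ℝ := fun ω => ⨆ g : G, (inner ℝ (g • X ω) t₀ : ℝ) with hA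
  -- pointwise upper bound
  have hptU : ∀ ω, A ω ≤ ‖t₀‖ ^ 2 + σ * ‖t₀‖ * F ω := by
    intro ω
    apply ciSup_le
    intro g
    have h1 : (inner ℝ (g • ε ω) u : ℝ) ≤ F ω := le_ciSup (hbddε ω) g
    have h2 := (abs_le.mp (hgt g)).2
    have h3 := hXg g ω
    have h4 := hεu g ω
    have h5 : σ * ‖t₀‖ * (inner ℝ (g • ε ω) u : ℝ) ≤ σ * ‖t₀‖ * F ω :=
      mul_le_mul_of_nonneg_left h1 (by positivity)
    have h6 : σ * ‖t₀‖ * (inner ℝ (g • ε ω) u : ℝ) = σ * inner ℝ (g • ε ω) t₀ := by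
      rw [h4]; field_simp
    linarith
  -- pointwise lower bound
  have hptL : ∀ ω, σ * ‖t₀‖ * F ω - ‖t₀‖ ^ 2 ≤ A ω := by
    intro ω
    have hpos : (0:ℝ) < σ * ‖t₀‖ := mul_pos hσ hc
    have hled : F ω ≤ (A ω + ‖t₀‖ ^ 2) / (σ * ‖t₀‖) := by
      apply ciSup_le
      intro g
      rw [le_div_iff₀ hpos]
      have h1 : (inner ℝ (g • X ω) t₀ : ℝ) ≤ A ω := le_ciSup (hbddX ω) g
      have h2 := (abs_le.mp (hgt g)).1
      have h3 := hXg g ω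
      have h6 : (inner ℝ (g • ε ω) u : ℝ) * (σ * ‖t₀‖) = σ * inner ℝ (g • ε ω) t₀ := by
        rw [hεu g ω]; field_simp
      linarith
    have := (le_div_iff₀ hpos).mp hled
    nlinarith
  -- integrability
  have hFmul : Integrable (fun ω => ‖t₀‖ ^ 2 + σ * ‖t₀‖ * F ω) μ :=
    (integrable_const _).add (hsupε.const_mul _)
  have hFmul' : Integrable (fun ω => σ * ‖t₀‖ * F ω - ‖t₀‖ ^ 2) μ :=
    (hsupε.const_mul _).sub (integrable_const _)
  have hintU : (∫ ω, A ω ∂μ) ≤ ‖t₀‖ ^ 2 + σ * ‖t₀‖ * ∫ ω, F ω ∂μ := by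
    calc (∫ ω, A ω ∂μ) ≤ ∫ ω, (‖t₀‖ ^ 2 + σ * ‖t₀‖ * F ω) ∂μ :=
          integral_mono hsupX hFmul hptU
      _ = ‖t₀‖ ^ 2 + σ * ‖t₀‖ * ∫ ω, F ω ∂μ := by
          rw [integral_add (integrable_const _) (hsupε.const_mul _),
            integral_const, integral_const_mul]
          simp
  have hintL : σ * ‖t₀‖ * (∫ ω, F ω ∂μ) - ‖t₀‖ ^ 2 ≤ ∫ ω, A ω ∂μ := by
    calc σ * ‖t₀‖ * (∫ ω, F ω ∂μ) - ‖t₀‖ ^ 2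
        = ∫ ω, (σ * ‖t₀‖ * F ω - ‖t₀‖ ^ 2) ∂μ := by
          rw [integral_sub (hsupε.const_mul _) (integrable_const _),
            integral_const, integral_const_mul]
          simp
      _ ≤ ∫ ω, A ω ∂μ := integral_mono hFmul' hsupX hptL
  -- ν ≤ 1
  have hεnorm : Integrable (fun ω => ‖ε ω‖) μ := hεint.norm
  have hle1 : (∫ ω, F ω ∂μ) ≤ 1 := by
    have hp1 : ∀ ω, F ω ≤ ‖ε ω‖ := by
      intro ω
      apply ciSup_le
      intro g
      calc (inner ℝ (g • ε ω) u : ℝ) ≤ ‖g • ε ω‖ * ‖u‖ := real_inner_le_norm _ _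
        _ = ‖ε ω‖ := by rw [hiso, hnu, mul_one]
    have hp2 : ∀ ω, ‖ε ω‖ ≤ (1 + ‖ε ω‖ ^ 2) / 2 := by
      intro ω; nlinarith [sq_nonneg (‖ε ω‖ - 1)]
    have hint2 : Integrable (fun ω => (1 + ‖ε ω‖ ^ 2) / 2) μ :=
      ((integrable_const _).add hε2int).div_const 2
    calc (∫ ω, F ω ∂μ) ≤ ∫ ω, ‖ε ω‖ ∂μ := integral_mono hsupε hεnorm hp1
      _ ≤ ∫ ω, (1 + ‖ε ω‖ ^ 2) / 2 ∂μ := integral_mono hεnorm hint2 hp2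
      _ = 1 := by
          rw [integral_div, integral_add (integrable_const _) hε2int,
            integral_const, hε2]
          simp
  -- ν > 0
  have hinner_int : Integrable (fun ω => (inner ℝ (ε ω) u : ℝ)) μ :=
    (ContinuousLinearMap.integrable_comp (innerSL ℝ u) hεint).congr
      (Filter.Eventually.of_forall fun ω => real_inner_comm (ε ω) u)
  have hmean : (∫ ω, (inner ℝ (ε ω) u : ℝ) ∂μ) = 0 := by
    have h1 : (∫ ω, (inner ℝ (ε ω) u : ℝ) ∂μ) = ∫ ω, (inner ℝ u (ε ω) : ℝ) ∂μ :=
      integral_congr_ae (Filter.Eventually.of_forall fun ω => real_inner_comm _ _)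
    rw [h1, integral_inner hεint, hεmean, inner_zero_right]
  have hdiff_int : Integrable (fun ω => F ω - inner ℝ (ε ω) u) μ := hsupε.sub hinner_int
  have hdiff_nonneg : ∀ ω, 0 ≤ F ω - (inner ℝ (ε ω) u : ℝ) := by
    intro ω
    have h1 : (inner ℝ ((1 : G) • ε ω) u : ℝ) ≤ F ω := le_ciSup (hbddε ω) 1
    simpa using h1
  have hsub : {ω | (inner ℝ (X ω) t₀ : ℝ) < ⨆ g : G, (inner ℝ (g • X ω) t₀ : ℝ)}
      ⊆ Function.support (fun ω => F ω - (inner ℝ (ε ω) u : ℝ)) := by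
    intro ω hω
    have hω' : (inner ℝ (X ω) t₀ : ℝ) < A ω := hω
    obtain ⟨g, hg⟩ := exists_lt_of_lt_ciSup hω'
    have hX0 : (inner ℝ (X ω) t₀ : ℝ) = ‖t₀‖ ^ 2 + σ * inner ℝ (ε ω) t₀ := by
      rw [hX ω, inner_add_left, real_inner_smul_left, real_inner_self_eq_norm_sq]
    have h3 := hXg g ω
    have h2 := (abs_le.mp (hgt g)).2
    have h5 : σ * (inner ℝ (ε ω) t₀ : ℝ) < σ * inner ℝ (g • ε ω) t₀ := by linarith
    have h5' : (inner ℝ (ε ω) t₀ : ℝ) < inner ℝ (g • ε ω) t₀ :=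
      (mul_lt_mul_iff_right₀ hσ).mp h5
    have h6 : (inner ℝ (ε ω) u : ℝ) < inner ℝ (g • ε ω) u := by
      rw [hu, real_inner_smul_right, real_inner_smul_right]
      exact mul_lt_mul_of_pos_left h5' (inv_pos.mpr hc)
    have h7 : (inner ℝ (g • ε ω) u : ℝ) ≤ F ω := le_ciSup (hbddε ω) g
    simp only [Function.mem_support]
    intro hcontra
    have : F ω = (inner ℝ (ε ω) u : ℝ) := by linarith [sub_eq_zero.mp hcontra]
    linarith
  have hpos : 0 < ∫ ω, (F ω - (inner ℝ (ε ω) u : ℝ)) ∂μ := by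
    rw [integral_pos_iff_support_of_nonneg hdiff_nonneg hdiff_int]
    exact lt_of_lt_of_le hP (measure_mono hsub)
  have hν0 : 0 < ∫ ω, F ω ∂μ := by
    have := integral_sub hsupε hinner_int
    rw [hmean] at this
    -- this : ∫ (F - inner) = ∫ F - 0
    rw [this] at hpos
    linarith
  refine ⟨hν0, hle1, ?_, ?_⟩
  · have h3' : (σ * (∫ ω, F ω ∂μ) - ‖t₀‖) * ‖t₀‖ ≤ ∫ ω, A ω ∂μ := by nlinarith
    have := (le_div_iff₀ hc).mpr h3'
    have heq : ‖t₀‖ * ((∫ ω, A ω ∂μ) / ‖t₀‖ ^ 2 - 1) = (∫ ω, A ω ∂μ) / ‖t₀‖ - ‖t₀‖ := by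
      field_simp
    rw [heq]
    linarith
  · have h4' : (∫ ω, A ω ∂μ) ≤ (‖t₀‖ + σ * ∫ ω, F ω ∂μ) * ‖t₀‖ := by nlinarith
    have := (div_le_iff₀ hc).mpr h4'
    have heq : ‖t₀‖ * ((∫ ω, A ω ∂μ) / ‖t₀‖ ^ 2 - 1) = (∫ ω, A ω ∂μ) / ‖t₀‖ - ‖t₀‖ := by
      field_simp
    rw [heq]
    linarith
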